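/- Let L ∈ [0,1]^{k×d} and consider the full information game, where the signal of every action at outcome x is the full loss column Φ_{a,x} = L e_x = (L_{1,x},…,L_{k,x}) ∈ [0,1]^k. Fix η > 0 and a probability vector q ∈ ℝ^k with q_a > 0 for all a. Set p = q and G(a, σ) = q_a σ for σ ∈ [0,1]^k. Then for every x ∈ [d]: (i) Σ_{a=1}^k G(a, Φ_{a,x}) = L e_x, so the estimator is unbiased and the bias term of the optimisation objective vanishes; and (ii) (1/η²) Σ_{a=1}^k q_a Ψ_q( η L e_x ) ≤ 1/2. Consequently the optimisation objective of the exploration-by-optimisation problem at (p, G) is at most 1/2 for every outcome x, so opt_q(η) ≤ 1/2. -/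

import Mathlib

/-- `Ψ_q(z) = ∑_a q_a (exp(-z_a) + z_a - 1)`. -/
noncomputable def Psi {k : ℕ} (q z : Fin k → ℝ) : ℝ :=
  ∑ a, q a * (Real.exp (-z a) + z a - 1)

lemma exp_quad_bound (z : ℝ) (hz : 0 ≤ z) :
    Real.exp (-z) + z - 1 ≤ z ^ 2 / 2 := by
  have hmono : MonotoneOn (fun t : ℝ => t ^ 2 / 2 - (Real.exp (-t) + t - 1))
      (Set.Ici (0 : ℝ)) := by
    apply monotoneOn_of_deriv_nonneg (convex_Ici 0)
    · fun_prop
    · intro t ht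
      have hd : HasDerivAt (fun t : ℝ => t ^ 2 / 2 - (Real.exp (-t) + t - 1))
          (t - (Real.exp (-t) * (-1) + 1)) t := by
        have h1 : HasDerivAt (fun t : ℝ => t ^ 2 / 2) t t := by
          have := (hasDerivAt_pow 2 t).div_const 2
          simpa using this
        have h2 : HasDerivAt (fun t : ℝ => Real.exp (-t) + t - 1)
            (Real.exp (-t) * (-1) + 1) t := by
          have he : HasDerivAt (fun t : ℝ => Real.exp (-t))
              (Real.exp (-t) * (-1)) t := by
            exact (Real.hasDerivAt_exp (-t)).comp t (hasDerivAt_neg t)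
          simpa using (he.add (hasDerivAt_id t)).sub_const 1
        exact h1.sub h2
      exact hd.differentiableAt.differentiableWithinAt
    · intro t ht
      have ht' : (0 : ℝ) < t := by simpa using ht
      have hd : HasDerivAt (fun t : ℝ => t ^ 2 / 2 - (Real.exp (-t) + t - 1))
          (t - (Real.exp (-t) * (-1) + 1)) t := by
        have h1 : HasDerivAt (fun t : ℝ => t ^ 2 / 2) t t := by
          have := (hasDerivAt_pow 2 t).div_const 2
          simpa using this
        have h2 : HasDerivAt (fun t : ℝ => Real.exp (-t) + t - 1)
            (Real.exp (-t) * (-1) + 1) t := by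
          have he : HasDerivAt (fun t : ℝ => Real.exp (-t))
              (Real.exp (-t) * (-1)) t := by
            exact (Real.hasDerivAt_exp (-t)).comp t (hasDerivAt_neg t)
          simpa using (he.add (hasDerivAt_id t)).sub_const 1
        exact h1.sub h2
      rw [hd.deriv]
      have := Real.add_one_le_exp (-t)
      nlinarith
  have h0 : (0 : ℝ) ∈ Set.Ici (0 : ℝ) := Set.mem_Ici.mpr le_rfl
  have := hmono h0 (Set.mem_Ici.mpr hz) hz
  norm_num at this
  linarith

/-- Full information game: the signal of every action at outcome `x` is the
full loss column `L e_x`, `p = q` and `G(a, σ) = q_a σ`.  The estimator is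
unbiased, the bias term vanishes, the stability term is at most `1/2`, and
hence the exploration-by-optimisation objective at `(p, G)` is at most `1/2`
for every outcome, so `opt_q(η) ≤ 1/2`. -/
theorem stmt6 (k d : ℕ) (hk : 0 < k) (hd : 0 < d)
    (L : Fin k → Fin d → ℝ) (hL : ∀ a x, L a x ∈ Set.Icc (0 : ℝ) 1)
    (η : ℝ) (hη : 0 < η)
    (q : Fin k → ℝ) (hq0 : ∀ a, 0 < q a) (hq1 : ∑ a, q a = 1)
    (G : Fin k → (Fin k → ℝ) → Fin k → ℝ)
    (hGdef : ∀ a σ b, G a σ b = q a * σ b) :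
    ∀ x : Fin d,
      -- (i) unbiasedness: `∑_a G(a, Φ_{a,x}) = L e_x`
      (∀ b, ∑ a, G a (fun c => L c x) b = L b x) ∧
      -- the bias term of the objective vanishes
      ((∑ b, q b * (L b x - ∑ a, G a (fun c => L c x) b))
          + (⨆ c : Fin k, ((∑ a, G a (fun c' => L c' x) c) - L c x)) = 0) ∧
      -- (ii) the stability term is at most `1/2`
      ((1 / η ^ 2) * ∑ a, q a * Psi q (fun b => η * L b x) ≤ 1 / 2) ∧
      -- the whole objective at `(p, G)` with `p = q` is at most `1/2`
      (((∑ a, (q a - q a) * L a x)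
            + ((∑ b, q b * (L b x - ∑ a, G a (fun c => L c x) b))
              + (⨆ c : Fin k, ((∑ a, G a (fun c' => L c' x) c) - L c x)))) / η
          + (1 / η ^ 2) * ∑ a, q a *
              Psi q (fun b => η * G a (fun c => L c x) b / q a)
          ≤ 1 / 2) := by
  intro x
  haveI : Nonempty (Fin k) := ⟨⟨0, hk⟩⟩
  have hunb : ∀ b, ∑ a, G a (fun c => L c x) b = L b x := by
    intro b
    simp only [hGdef]
    rw [← Finset.sum_mul, hq1, one_mul]
  have hbias : (∑ b, q b * (L b x - ∑ a, G a (fun c => L c x) b))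
      + (⨆ c : Fin k, ((∑ a, G a (fun c' => L c' x) c) - L c x)) = 0 := by
    have h1 : (∑ b, q b * (L b x - ∑ a, G a (fun c => L c x) b)) = 0 := by
      apply Finset.sum_eq_zero
      intro b _
      rw [hunb b]; ring
    have h2 : (⨆ c : Fin k, ((∑ a, G a (fun c' => L c' x) c) - L c x)) = 0 := by
      have : ∀ c : Fin k, ((∑ a, G a (fun c' => L c' x) c) - L c x) = 0 := by
        intro c; rw [hunb c]; ring
      simp only [this, ciSup_const]
    rw [h1, h2, add_zero]
  have hPsi : Psi q (fun b => η * L b x) ≤ η ^ 2 / 2 := by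
    unfold Psi
    have hbd : ∀ b ∈ Finset.univ, q b * (Real.exp (-(η * L b x)) + η * L b x - 1)
        ≤ q b * (η ^ 2 / 2) := by
      intro b _
      apply mul_le_mul_of_nonneg_left _ (hq0 b).le
      have hLb := hL b x
      have hz : 0 ≤ η * L b x := mul_nonneg hη.le hLb.1
      have := exp_quad_bound (η * L b x) hz
      have hL2 : L b x ^ 2 ≤ 1 := by nlinarith [hLb.1, hLb.2]
      have hsq : (η * L b x) ^ 2 ≤ η ^ 2 := by
        rw [mul_pow]
        nlinarith [sq_nonneg η]
      nlinarith
    calc ∑ b, q b * (Real.exp (-(η * L b x)) + η * L b x - 1)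
        ≤ ∑ b, q b * (η ^ 2 / 2) := Finset.sum_le_sum hbd
      _ = η ^ 2 / 2 := by rw [← Finset.sum_mul, hq1, one_mul]
  have hstab : (1 / η ^ 2) * ∑ a, q a * Psi q (fun b => η * L b x) ≤ 1 / 2 := by
    have hη2 : 0 < η ^ 2 := by positivity
    have hsum : ∑ a, q a * Psi q (fun b => η * L b x) ≤ η ^ 2 / 2 := by
      calc ∑ a, q a * Psi q (fun b => η * L b x)
          = (∑ a, q a) * Psi q (fun b => η * L b x) := by rw [Finset.sum_mul]
        _ = Psi q (fun b => η * L b x) := by rw [hq1, one_mul]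
        _ ≤ η ^ 2 / 2 := hPsi
    calc (1 / η ^ 2) * ∑ a, q a * Psi q (fun b => η * L b x)
        ≤ (1 / η ^ 2) * (η ^ 2 / 2) := by
          apply mul_le_mul_of_nonneg_left hsum (by positivity)
      _ = 1 / 2 := by field_simp
  refine ⟨hunb, hbias, hstab, ?_⟩
  have hG' : ∀ a b, η * G a (fun c => L c x) b / q a = η * L b x := by
    intro a b
    rw [hGdef]
    rw [mul_comm (q a) (L b x), ← mul_assoc, mul_div_assoc,
      div_self (hq0 a).ne', mul_one]
  have hrw : ∀ a, Psi q (fun b => η * G a (fun c => L c x) b / q a)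
      = Psi q (fun b => η * L b x) := by
    intro a
    unfold Psi
    apply Finset.sum_congr rfl
    intro b _
    simp only [hG' a b]
  have h0 : (∑ a, (q a - q a) * L a x) = 0 :=
    Finset.sum_eq_zero fun a _ => by ring
  rw [h0, hbias, zero_add, zero_div, zero_add]
  calc (1 / η ^ 2) * ∑ a, q a * Psi q (fun b => η * G a (fun c => L c x) b / q a)
      = (1 / η ^ 2) * ∑ a, q a * Psi q (fun b => η * L b x) := by
        congr 1; apply Finset.sum_congr rfl; intro a _; rw [hrw a]
    _ ≤ 1 / 2 := hstab
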